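/- There exists a positive number s > 0 such that for every (x,y) in the region Ê₁ = {(x,y) : k ≤ x ≤ û₁, y < ŵ₁}, at least one of the following three conditions holds: ȳ − y ≥ s, or f(x,y) ∉ Ê₁, or ȳ̄ − ȳ ≥ s, where (x̄, ȳ) := f(x,y) and (x̄̄, ȳ̄) := f(x̄, ȳ). -/
import Mathlib

lemma chialvo_aux_sq_exp (x y : ℝ) (hx : 0 ≤ x) :
    x ^ 2 * Real.exp (y - x) ≤ 4 / Real.exp 2 * Real.exp y := by
  have h1 : x / 2 ≤ Real.exp (x / 2 - 1) := by
    have := Real.add_one_le_exp (x / 2 - 1); linarith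
  have hpos : (0:ℝ) < Real.exp (x / 2 - 1) := Real.exp_pos _
  have h2 : Real.exp (x / 2 - 1) * Real.exp (x / 2 - 1) = Real.exp (x - 2) := by
    rw [← Real.exp_add]; ring_nf
  have h3 : x ^ 2 ≤ 4 * Real.exp (x - 2) := by nlinarith [mul_le_mul h1 h1 (by linarith) hpos.le]
  have h4 : x ^ 2 * Real.exp (y - x) ≤ 4 * Real.exp (x - 2) * Real.exp (y - x) := by
    have := (Real.exp_pos (y - x)).le
    nlinarith
  calc x ^ 2 * Real.exp (y - x) ≤ 4 * Real.exp (x - 2) * Real.exp (y - x) := h4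
    _ = 4 / Real.exp 2 * Real.exp y := by
        rw [mul_assoc, ← Real.exp_add]
        rw [show x - 2 + (y - x) = y + -2 by ring, Real.exp_add, Real.exp_neg]
        field_simp

/-- Moving upward in region `Ê₁`: there is a uniform positive speed `s` such that
for every point of `Ê₁`, either `ȳ - y ≥ s`, or the image leaves `Ê₁`,
or `ȳ̄ - ȳ ≥ s`. -/
theorem chialvo_regionE1_speed
    (a b c k : ℝ)
    (ha : a ∈ Set.Ioo (0:ℝ) 1) (hb : b ∈ Set.Ioo (0:ℝ) 1)
    (hc : c ∈ Set.Ioo (0:ℝ) 1) (hk : 0 < k)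
    (f : ℝ × ℝ → ℝ × ℝ)
    (hf : ∀ p : ℝ × ℝ,
      f p = (p.1 ^ 2 * Real.exp (p.2 - p.1) + k, a * p.2 - b * p.1 + c))
    (v u1 w1 : ℝ)
    (hv : v = (c - b * k) / (1 - a))
    (hu1 : u1 = 4 / Real.exp 2 * Real.exp v + k)
    (hw1 : w1 = (c - b * u1) / (1 - a))
    (E1 : Set (ℝ × ℝ))
    (hE1 : E1 = {p : ℝ × ℝ | k ≤ p.1 ∧ p.1 ≤ u1 ∧ p.2 < w1}) :
    ∃ s : ℝ, s > 0 ∧ ∀ p ∈ E1,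
      (f p).2 - p.2 ≥ s ∨ f p ∉ E1 ∨ (f (f p)).2 - (f p).2 ≥ s := by
  obtain ⟨ha0, ha1⟩ := ha
  obtain ⟨hb0, hb1⟩ := hb
  have h1a : (0:ℝ) < 1 - a := by linarith
  set u1' : ℝ := 4 / Real.exp 2 * Real.exp w1 + k with hu1'def
  have hC : (0:ℝ) < 4 / Real.exp 2 := by positivity
  have hku1 : k < u1 := by
    have := Real.exp_pos v
    rw [hu1]; nlinarith
  have hw1v : w1 < v := by
    rw [hw1, hv]
    apply div_lt_div_of_pos_right ?_ h1a
    nlinarith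
  have hexp : Real.exp w1 < Real.exp v := Real.exp_lt_exp.mpr hw1v
  have hu1'lt : u1' < u1 := by rw [hu1'def, hu1]; nlinarith
  -- (1-a) * w1 = c - b * u1
  have hw1eq : (1 - a) * w1 = c - b * u1 := by
    rw [hw1]; field_simp
  refine ⟨b * (u1 - u1'), by nlinarith, ?_⟩
  intro p hp
  by_cases hmem : f p ∈ E1
  · right; right
    rw [hE1] at hp hmem
    obtain ⟨hx1, hx2, hy⟩ := hp
    obtain ⟨hfx1, hfx2, hfy⟩ := hmem
    -- bound on (f p).1
    have hfx' : (f p).1 ≤ u1' := by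
      rw [hf p]
      have h := chialvo_aux_sq_exp p.1 p.2 (by linarith)
      have hle : Real.exp p.2 ≤ Real.exp w1 := Real.exp_le_exp.mpr hy.le
      simp only [hu1'def]
      have hC' := hC.le
      nlinarith
    have hffy : (f (f p)).2 = a * (f p).2 - b * (f p).1 + c := by
      rw [hf (f p)]
    rw [hffy]
    nlinarith [hfy, hfx', hw1eq]
  · right; left; exact hmem
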